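/- Let 1 ≤ n ≤ N and z ∈ ℂ. For U Haar-distributed in the unitary group U(N), the expected value of Per_n(U − z), the permanent of the upper-left n×n block of U − z·I, equals (−z)ⁿ. -/

import Mathlib

open MeasureTheory

namespace RandomImmanants

/-- The Borel/pi measurable structure on square complex matrices. -/
noncomputable instance (N : ℕ) : MeasurableSpace (Matrix (Fin N) (Fin N) ℂ) :=
  inferInstanceAs (MeasurableSpace (Fin N → Fin N → ℂ))

/-- The Borel/pi measurable structure on square real matrices. -/
instance (N : ℕ) : MeasurableSpace (Matrix (Fin N) (Fin N) ℝ) :=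
  inferInstanceAs (MeasurableSpace (Fin N → Fin N → ℝ))

/-- The `i`-th largest part (0-indexed) of a partition; `0` beyond its length. -/
def partNth {n : ℕ} (γ : Nat.Partition n) (i : ℕ) : ℕ :=
  ((γ.parts.sort (· ≤ ·)).reverse).getD i 0

/-- The number of colorings `g : {0,…,m-1} → {0,…,m-1}` that are constant on the cycles
of `π` and whose color class sizes are prescribed by `β` (this is the evaluation of the
complete homogeneous symmetric function `h_β` against the power sum `p_μ`, `μ` the cycle
type of `π`; a negative entry of `β` gives `0`). -/
def etaChar {m : ℕ} (β : Fin m → ℤ) (π : Equiv.Perm (Fin m)) : ℤ :=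
  ((Finset.univ.filter fun g : Fin m → Fin m =>
    g ∘ π = g ∧ ∀ i : Fin m,
      (((Finset.univ.filter fun k => g k = i).card : ℤ) = β i)).card : ℤ)

/-- The irreducible character `χ_γ` of the symmetric group `S_m` labelled by the partition
`γ ⊢ m`, via the Jacobi–Trudi determinantal formula `χ_γ = det (h_{γ_i - i + j})_{1 ≤ i,j ≤ m}`
applied to power sums. -/
def chiChar {m : ℕ} (γ : Nat.Partition m) (π : Equiv.Perm (Fin m)) : ℤ :=
  ∑ σ : Equiv.Perm (Fin m),
    ((Equiv.Perm.sign σ : ℤˣ) : ℤ) *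
      etaChar (fun i => (partNth γ i : ℤ) + ((σ i : ℕ) : ℤ) - ((i : ℕ) : ℤ)) π

/-- The partition `2λ = (2λ₁, 2λ₂, …)` of `2n` obtained by doubling each part of `λ ⊢ n`. -/
def doublePart {n : ℕ} (lam : Nat.Partition n) : Nat.Partition (2 * n) where
  parts := lam.parts.map (fun a => 2 * a)
  parts_pos := by
    intro i hi
    obtain ⟨a, ha, rfl⟩ := Multiset.mem_map.mp hi
    have := lam.parts_pos ha
    omega
  parts_sum := by
    have h : (lam.parts.map fun a => 2 * a).sum = 2 * lam.parts.sum := by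
      simpa using Multiset.sum_map_mul_left (a := (2 : ℕ)) (f := fun a => a) (s := lam.parts)
    rw [h, lam.parts_sum]

/-- The partition `(1ⁿ)` of `n`. -/
def onesPart (n : ℕ) : Nat.Partition n where
  parts := Multiset.replicate n 1
  parts_pos := by
    intro i hi
    rw [Multiset.eq_of_mem_replicate hi]
    exact one_pos
  parts_sum := by simp

/-- Letters `{1,…,2n}` (0-indexed: `{0,…,2n-1}`) as pairs: `(k, r) ↦ 2k + r`, so the
1-indexed letter `2k-1` (odd) is `(k-1, 0)` and the letter `2k` (even) is `(k-1, 1)`. -/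
def pairEquiv (n : ℕ) : Fin n × Fin 2 ≃ Fin (2 * n) where
  toFun x := ⟨2 * (x.1 : ℕ) + (x.2 : ℕ), by have h1 := x.1.isLt; have h2 := x.2.isLt; omega⟩
  invFun i := (⟨(i : ℕ) / 2, by have := i.isLt; omega⟩, ⟨(i : ℕ) % 2, by omega⟩)
  left_inv := by
    rintro ⟨⟨a, ha⟩, ⟨b, hb⟩⟩
    simp only [Prod.mk.injEq]
    constructor <;> exact Fin.ext (by simp; omega)
  right_inv := by
    rintro ⟨v, hv⟩
    exact Fin.ext (by simp; omega)

/-- The fixed-point free involution `p = (1 2)(3 4)⋯(2n-1 2n)` of `{1,…,2n}`. -/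
def pairSwap (n : ℕ) : Equiv.Perm (Fin (2 * n)) :=
  (pairEquiv n).permCongr (Equiv.prodCongr (Equiv.refl (Fin n)) (Equiv.swap 0 1))

/-- For `π ∈ S_n`, the permutation `π_o ∈ S_{2n}` acting on the odd letters:
`π_o(2k-1) = 2π(k)-1` and `π_o(2k) = 2k` (1-indexed). -/
def toOdd {n : ℕ} (π : Equiv.Perm (Fin n)) : Equiv.Perm (Fin (2 * n)) :=
  (pairEquiv n).permCongr
    (Equiv.prodCongrLeft fun r : Fin 2 => if r = 0 then π else Equiv.refl (Fin n))

/-- For `π ∈ S_n`, the permutation `π_e ∈ S_{2n}` acting on the even letters: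
`π_e(2k) = 2π(k)` and `π_e(2k-1) = 2k-1` (1-indexed). -/
def toEven {n : ℕ} (π : Equiv.Perm (Fin n)) : Equiv.Perm (Fin (2 * n)) :=
  (pairEquiv n).permCongr
    (Equiv.prodCongrLeft fun r : Fin 2 => if r = 1 then π else Equiv.refl (Fin n))

/-- The hyperoctahedral group `H_n ⊂ S_{2n}`: the centralizer of the trivial matching
`{{1,2},{3,4},…,{2n-1,2n}}`, i.e. of the involution `pairSwap n`. -/
def hyperOct (n : ℕ) : Finset (Equiv.Perm (Fin (2 * n))) :=
  Finset.univ.filter fun h => h * pairSwap n = pairSwap n * h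

/-- The zonal spherical function `ω_λ` of the Gelfand pair `(S_{2n}, H_n)`:
`ω_λ(τ) = (1/|H_n|) ∑_{ξ ∈ H_n} χ_{2λ}(τξ)`. -/
noncomputable def omegaSph {n : ℕ} (lam : Nat.Partition n) (τ : Equiv.Perm (Fin (2 * n))) : ℝ :=
  (1 / ((hyperOct n).card : ℝ)) * ∑ ξ ∈ hyperOct n, (chiChar (doublePart lam) (τ * ξ) : ℝ)

/-- `g_λ = ∑_{μ ⊢ n} |C_μ| ω_λ(μ)`, written as a sum over `S_n` (the permutations of cycle
type `μ`, embedded on the odd letters, contribute `|C_μ| ω_λ(μ)`). -/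
noncomputable def gFun {n : ℕ} (lam : Nat.Partition n) : ℝ :=
  ∑ σ : Equiv.Perm (Fin n), omegaSph lam (toOdd σ)

/-- `G_{λ,γ} = ∑_{μ ⊢ n} |C_μ| ω_λ(μ) χ_γ(μ)`, written as a sum over `S_n`. -/
noncomputable def GFun {n : ℕ} (lam γ : Nat.Partition n) : ℝ :=
  ∑ σ : Equiv.Perm (Fin n), omegaSph lam (toOdd σ) * (chiChar γ σ : ℝ)

/-- `[N]_γ^{(α)} = ∏_{(i,j) ∈ γ} (N + α(j-1) - i + 1)`, the product running over the boxes
of the Young diagram of `γ` (row `i`, column `j`, 1-indexed). -/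
def polyGen (α : ℤ) (N : ℤ) {m : ℕ} (γ : Nat.Partition m) : ℤ :=
  ∏ i ∈ Finset.range m, ∏ j ∈ Finset.range (partNth γ i), (N + α * (j : ℤ) - (i : ℤ))

/-- The upper-left `n × n` block of an `N × N` matrix (junk value `0` if `n > N`). -/
def subBlock (n N : ℕ) {R : Type*} [Zero R] (U : Matrix (Fin N) (Fin N) R) :
    Matrix (Fin n) (Fin n) R := fun i j =>
  if h : (i : ℕ) < N ∧ (j : ℕ) < N then U ⟨i, h.1⟩ ⟨j, h.2⟩ else 0

/-- The permanent of a square matrix. -/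
def perMat {m : ℕ} {R : Type*} [CommRing R] (A : Matrix (Fin m) (Fin m) R) : R :=
  ∑ π : Equiv.Perm (Fin m), ∏ k : Fin m, A k (π k)

/-- The immanant `Imm_γ(A) = ∑_{π ∈ S_m} χ_γ(π) ∏_k A_{k, π(k)}`. -/
def immMat {m : ℕ} {R : Type*} [CommRing R] (γ : Nat.Partition m)
    (A : Matrix (Fin m) (Fin m) R) : R :=
  ∑ π : Equiv.Perm (Fin m), (chiChar γ π : R) * ∏ k : Fin m, A k (π k)

/-- The full cycle type of a permutation of `m` letters, a partition of `m`
(fixed points contribute parts equal to `1`). -/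
def fullCycleType {m : ℕ} [Fintype (Fin m)] (σ : Equiv.Perm (Fin m)) : Multiset ℕ :=
  σ.cycleType + Multiset.replicate (m - σ.cycleType.sum) 1

/-- Halve all multiplicities in a multiset. -/
def halfMultiset (ν : Multiset ℕ) : Multiset ℕ :=
  ∑ k ∈ ν.toFinset, Multiset.replicate (ν.count k / 2) k

/-- The coset type of `σ ∈ S_{2n}`: the connected components of the graph on `{1,…,2n}`
whose edges are the blocks of the trivial matching `t` and of `σ(t)` are exactly the
cycle-pairs of the permutation `p ∘ (σ p σ⁻¹)` (`p = pairSwap n`), each component with `2k`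
vertices producing two `k`-cycles; so the coset type is obtained by halving the multiplicities
in the full cycle type of `p * (σ * p * σ⁻¹)`. -/
def cosetTypeM (n : ℕ) (σ : Equiv.Perm (Fin (2 * n))) : Multiset ℕ :=
  halfMultiset (fullCycleType (pairSwap n * (σ * pairSwap n * σ⁻¹)))

lemma measurable_entry {N : ℕ} (i j : Fin N) :
    Measurable fun U : Matrix.unitaryGroup (Fin N) ℂ => (U : Matrix (Fin N) (Fin N) ℂ) i j := by
  have h1 : Measurable fun U : Matrix.unitaryGroup (Fin N) ℂ =>
      (U : Matrix (Fin N) (Fin N) ℂ) := measurable_subtype_coe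
  exact (measurable_pi_apply j).comp ((measurable_pi_apply i).comp h1)

instance (N : ℕ) : MeasurableMul (Matrix.unitaryGroup (Fin N) ℂ) := by
  constructor
  · intro c
    have h : Measurable fun U : Matrix.unitaryGroup (Fin N) ℂ =>
        ((c : Matrix (Fin N) (Fin N) ℂ) * (U : Matrix (Fin N) (Fin N) ℂ)) := by
      apply measurable_pi_lambda; intro i
      apply measurable_pi_lambda; intro j
      simp only [Matrix.mul_apply]
      exact Finset.measurable_sum _ fun k _ => ((measurable_entry k j).const_mul _)
    exact h.subtype_mk
  · intro c
    have h : Measurable fun U : Matrix.unitaryGroup (Fin N) ℂ =>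
        ((U : Matrix (Fin N) (Fin N) ℂ) * (c : Matrix (Fin N) (Fin N) ℂ)) := by
      apply measurable_pi_lambda; intro i
      apply measurable_pi_lambda; intro j
      simp only [Matrix.mul_apply]
      exact Finset.measurable_sum _ fun k _ => ((measurable_entry i k).mul_const _)
    exact h.subtype_mk

lemma entry_norm_le_one {N : ℕ} (U : Matrix.unitaryGroup (Fin N) ℂ) (i j : Fin N) :
    ‖(U : Matrix (Fin N) (Fin N) ℂ) i j‖ ≤ 1 := by
  have h := U.2
  rw [Matrix.mem_unitaryGroup_iff] at h
  have h1 : ((U : Matrix (Fin N) (Fin N) ℂ) * star (U : Matrix (Fin N) (Fin N) ℂ)) i i = 1 := by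
    rw [h]; simp [Matrix.one_apply]
  rw [Matrix.mul_apply] at h1
  have h2 : ∑ k, Complex.normSq ((U : Matrix (Fin N) (Fin N) ℂ) i k) = 1 := by
    have := congrArg Complex.re h1
    simpa [Matrix.star_apply, Complex.mul_conj, Complex.re_sum] using this
  have h3 : Complex.normSq ((U : Matrix (Fin N) (Fin N) ℂ) i j) ≤ 1 := by
    rw [← h2]
    exact Finset.single_le_sum (fun k _ => Complex.normSq_nonneg _) (Finset.mem_univ j)
  have h4 := Complex.sq_norm ((U : Matrix (Fin N) (Fin N) ℂ) i j)
  nlinarith [norm_nonneg ((U : Matrix (Fin N) (Fin N) ℂ) i j)]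


lemma monomial_integrable {N : ℕ} {ι : Type*} (μ : Measure (Matrix.unitaryGroup (Fin N) ℂ))
    [IsProbabilityMeasure μ] (S : Finset ι) (row col : ι → Fin N) :
    Integrable (fun U : Matrix.unitaryGroup (Fin N) ℂ =>
      ∏ k ∈ S, (U : Matrix (Fin N) (Fin N) ℂ) (row k) (col k)) μ := by
  refine ⟨Measurable.aestronglyMeasurable ?_, ?_⟩
  · exact Finset.measurable_prod _ fun k _ => measurable_entry (row k) (col k)
  · refine HasFiniteIntegral.of_bounded (C := 1) (ae_of_all _ fun U => ?_)
    calc ‖∏ k ∈ S, (U : Matrix (Fin N) (Fin N) ℂ) (row k) (col k)‖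
        = ∏ k ∈ S, ‖(U : Matrix (Fin N) (Fin N) ℂ) (row k) (col k)‖ := norm_prod _ _
      _ ≤ 1 := Finset.prod_le_one (fun k _ => norm_nonneg _)
            (fun k _ => entry_norm_le_one U (row k) (col k))

lemma monomial_integral_zero {N : ℕ} {ι : Type*} (μ : Measure (Matrix.unitaryGroup (Fin N) ℂ))
    [μ.IsHaarMeasure] (S : Finset ι) (hS : S.Nonempty) (row col : ι → Fin N) :
    ∫ U, ∏ k ∈ S, (U : Matrix (Fin N) (Fin N) ℂ) (row k) (col k) ∂μ = 0 := by
  set m := S.card with hm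
  have hm0 : (m : ℂ) ≠ 0 := Nat.cast_ne_zero.mpr hS.card_pos.ne'
  set x : ℂ := (Real.pi : ℂ) * Complex.I / m with hx
  set ζ : ℂ := Complex.exp x with hζ
  have hconj : (starRingEnd ℂ) x = -x := by
    simp [hx, map_div₀, map_mul, Complex.conj_I, Complex.conj_ofReal]
    ring
  have hζζ : ζ * star ζ = 1 := by
    show ζ * (starRingEnd ℂ) ζ = 1
    rw [hζ, ← Complex.exp_conj, hconj, ← Complex.exp_add, add_neg_cancel, Complex.exp_zero]
  have hpow : ζ ^ m = -1 := by
    rw [hζ, ← Complex.exp_nat_mul]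
    have hmx : (m : ℂ) * x = (Real.pi : ℂ) * Complex.I := by
      rw [hx]; field_simp
    rw [hmx, Complex.exp_pi_mul_I]
  have hmem : ζ • (1 : Matrix (Fin N) (Fin N) ℂ) ∈ Matrix.unitaryGroup (Fin N) ℂ := by
    rw [Matrix.mem_unitaryGroup_iff]
    rw [star_smul, star_one, Matrix.smul_mul, Matrix.mul_smul, smul_smul, mul_one, hζζ, one_smul]
  set g : Matrix.unitaryGroup (Fin N) ℂ := ⟨ζ • 1, hmem⟩ with hg
  set f : Matrix.unitaryGroup (Fin N) ℂ → ℂ := fun U =>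
    ∏ k ∈ S, (U : Matrix (Fin N) (Fin N) ℂ) (row k) (col k) with hf
  have key : ∀ U, f (g * U) = ζ ^ m * f U := by
    intro U
    have hcoe : ((g * U : Matrix.unitaryGroup (Fin N) ℂ) : Matrix (Fin N) (Fin N) ℂ)
        = ζ • (U : Matrix (Fin N) (Fin N) ℂ) := by
      show (g : Matrix (Fin N) (Fin N) ℂ) * (U : Matrix (Fin N) (Fin N) ℂ) = _
      rw [hg]
      simp [Matrix.smul_mul]
    rw [hf]
    simp only [hcoe, Matrix.smul_apply, smul_eq_mul]
    rw [Finset.prod_mul_distrib, Finset.prod_const, hm]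
  have h1 : ∫ U, f (g * U) ∂μ = ∫ U, f U ∂μ := integral_mul_left_eq_self f g
  have h2 : ∫ U, f (g * U) ∂μ = ζ ^ m * ∫ U, f U ∂μ := by
    simp_rw [key]
    exact integral_const_mul _ _
  rw [h2, hpow] at h1
  have h3 : (2 : ℂ) * ∫ U, f U ∂μ = 0 := by linear_combination -h1
  have := mul_eq_zero.mp h3
  exact this.resolve_left two_ne_zero


/-- For `1 ≤ n ≤ N`, `z ∈ ℂ`, and `U` Haar-distributed in `U(N)`, the
average of `Per_n(U - z)` (the permanent of the upper-left `n × n` block of `U - z·I`)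
equals `(-z)ⁿ`. -/
theorem permanent_polynomial_mean_unitary (n N : ℕ) (hn : 1 ≤ n) (hnN : n ≤ N) (z : ℂ)
    (μ : Measure (Matrix.unitaryGroup (Fin N) ℂ))
    [μ.IsHaarMeasure] [IsProbabilityMeasure μ] :
    (∫ U, perMat (subBlock n N ((U : Matrix (Fin N) (Fin N) ℂ) - z • 1)) ∂μ)
      = (-z) ^ n := by
  classical
  set c : Fin n → Fin N := Fin.castLE hnN with hc
  set gc : Fin n → Equiv.Perm (Fin n) → ℂ :=
    fun k π => -(z * if k = π k then (1:ℂ) else 0) with hgc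
  have hentry : ∀ (U : Matrix.unitaryGroup (Fin N) ℂ) (π : Equiv.Perm (Fin n)) (k : Fin n),
      subBlock n N ((U : Matrix (Fin N) (Fin N) ℂ) - z • 1) k (π k)
        = (U : Matrix (Fin N) (Fin N) ℂ) (c k) (c (π k)) + gc k π := by
    intro U π k
    have hk : (k : ℕ) < N := lt_of_lt_of_le k.isLt hnN
    have hπk : ((π k : Fin n) : ℕ) < N := lt_of_lt_of_le (π k).isLt hnN
    simp only [subBlock]
    rw [dif_pos ⟨hk, hπk⟩]
    have h1 : (⟨(k : ℕ), hk⟩ : Fin N) = c k := rfl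
    have h2 : (⟨((π k : Fin n) : ℕ), hπk⟩ : Fin N) = c (π k) := rfl
    rw [h1, h2, Matrix.sub_apply, Matrix.smul_apply, Matrix.one_apply, smul_eq_mul,
      sub_eq_add_neg, hgc]
    congr 2
    simp [hc, Fin.castLE_inj]
  have hfun : (fun U : Matrix.unitaryGroup (Fin N) ℂ =>
        perMat (subBlock n N ((U : Matrix (Fin N) (Fin N) ℂ) - z • 1)))
      = fun U : Matrix.unitaryGroup (Fin N) ℂ => ∑ π : Equiv.Perm (Fin n),
          ∑ S ∈ (Finset.univ : Finset (Fin n)).powerset,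
            (∏ k ∈ S, (U : Matrix (Fin N) (Fin N) ℂ) (c k) (c (π k))) *
            ∏ k ∈ Finset.univ \ S, gc k π := by
    funext U
    unfold perMat
    refine Finset.sum_congr rfl fun π _ => ?_
    calc (∏ k : Fin n, subBlock n N ((U : Matrix (Fin N) (Fin N) ℂ) - z • 1) k (π k))
        = ∏ k : Fin n, ((U : Matrix (Fin N) (Fin N) ℂ) (c k) (c (π k)) + gc k π) :=
          Finset.prod_congr rfl fun k _ => hentry U π k
      _ = _ := Finset.prod_add _ _ _
  rw [hfun]
  rw [integral_finset_sum _ (fun π _ => integrable_finset_sum _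
    (fun S _ => ((monomial_integrable μ S c (fun k => c (π k)))).mul_const _))]
  have hinner : ∀ π : Equiv.Perm (Fin n),
      (∫ U, ∑ S ∈ (Finset.univ : Finset (Fin n)).powerset,
          (∏ k ∈ S, (U : Matrix (Fin N) (Fin N) ℂ) (c k) (c (π k))) *
          ∏ k ∈ Finset.univ \ S, gc k π ∂μ)
        = ∏ k : Fin n, gc k π := by
    intro π
    rw [integral_finset_sum _
      (fun S _ => ((monomial_integrable μ S c (fun k => c (π k)))).mul_const _)]
    have hterm : ∀ S ∈ (Finset.univ : Finset (Fin n)).powerset,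
        (∫ U, (∏ k ∈ S, (U : Matrix (Fin N) (Fin N) ℂ) (c k) (c (π k))) *
            ∏ k ∈ Finset.univ \ S, gc k π ∂μ)
          = (∫ U, ∏ k ∈ S, (U : Matrix (Fin N) (Fin N) ℂ) (c k) (c (π k)) ∂μ) *
            ∏ k ∈ Finset.univ \ S, gc k π := fun S _ => integral_mul_const _ _
    rw [Finset.sum_congr rfl hterm]
    rw [Finset.sum_eq_single_of_mem ∅ (Finset.empty_mem_powerset _)
      (fun S _ hS => by
        rw [monomial_integral_zero μ S (Finset.nonempty_iff_ne_empty.mpr hS), zero_mul])]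
    simp [Finset.sdiff_empty]
  rw [Finset.sum_congr rfl fun π _ => hinner π]
  rw [Finset.sum_eq_single 1 (fun π _ hπ => ?_) (fun h => absurd (Finset.mem_univ _) h)]
  · simp only [hgc, Equiv.Perm.one_apply, if_pos rfl, mul_one]
    rw [Finset.prod_const]
    simp
  · have : ∃ k, π k ≠ k := by
      by_contra hall
      push_neg at hall
      exact hπ (Equiv.ext hall)
    obtain ⟨k, hk⟩ := this
    refine Finset.prod_eq_zero (Finset.mem_univ k) ?_
    simp only [hgc]
    rw [if_neg (fun h : k = π k => hk h.symm)]
    ring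


end RandomImmanants
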